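/- Let k : ℝ^d × ℝ^d → ℝ be a continuous, bounded, symmetric, integrally strictly positive definite (ISPD) kernel, let X have law with density p with respect to Lebesgue measure, let ψ : Ω → ℝ^m be a square-integrable random vector with each component of h(x) := E[ψ | X=x]·p(x) in L²(ℝ^d), and let (ψ', X') be an independent copy of (ψ, X) with E[|⟨ψ, ψ'⟩ k(X,X')|] < ∞. Then E[⟨ψ, ψ'⟩ k(X, X')] = 0 if and only if E[ψ | X = x] = 0 ∈ ℝ^m for P_X-almost every x. -/

import Mathlib

open MeasureTheory RealInnerProductSpace
open scoped NNReal ENNReal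

/-- Vector-valued version of the MMR/CMR equivalence: for a continuous,
bounded, symmetric, ISPD kernel `k` and a square-integrable random vector `ψ : Ω → ℝ^m`,
`E[⟨ψ, ψ'⟩ k(X, X')] = 0` (with `(ψ', X')` an independent copy of `(ψ, X)`) if and only
if `E[ψ | X = x] = 0 ∈ ℝ^m` for `P_X`-almost every `x`. -/
theorem mmr_zero_iff_cmr_vector
    {Ω : Type*} [MeasurableSpace Ω] (P : Measure Ω) [IsProbabilityMeasure P]
    {d m : ℕ} (X : Ω → (Fin d → ℝ)) (hX : Measurable X)
    (p : (Fin d → ℝ) → ℝ) (hpm : Measurable p) (hp0 : ∀ x, 0 ≤ p x)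
    (hlaw : P.map X = volume.withDensity (fun x => ENNReal.ofReal (p x)))
    (k : (Fin d → ℝ) → (Fin d → ℝ) → ℝ)
    (hkCont : Continuous (fun q : (Fin d → ℝ) × (Fin d → ℝ) => k q.1 q.2))
    (hkBdd : ∃ C : ℝ, ∀ x y, |k x y| ≤ C)
    (hkSymm : ∀ x y, k x y = k y x)
    (hISPD : ∀ f : (Fin d → ℝ) → ℝ, Measurable f → MemLp f 2 volume →
      0 < ∫ x, (f x) ^ 2 ∂volume →
      0 < ∫ x, ∫ x', f x * k x x' * f x' ∂volume ∂volume)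
    (ψ : Ω → EuclideanSpace ℝ (Fin m)) (hψ : MemLp ψ 2 P)
    -- a fixed version `g` of the component-wise conditional expectation `E[ψ | X = ·]`:
    (g : (Fin d → ℝ) → EuclideanSpace ℝ (Fin m)) (hg : Measurable g)
    (hgVersion : ∀ i : Fin m, ∀ᵐ ω ∂P,
      (P[fun ω' => ψ ω' i | MeasurableSpace.comap X inferInstance]) ω = g (X ω) i)
    -- each component of `h(x) = E[ψ | X=x]·p(x)` is in `L²(ℝ^d)`:
    (hhL2 : ∀ i : Fin m, MemLp (fun x => g x i * p x) 2 volume)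
    -- `E[|⟨ψ, ψ'⟩ k(X,X')|] < ∞` on the product space:
    (hInt : Integrable
      (fun ω : Ω × Ω => (⟪ψ ω.1, ψ ω.2⟫ : ℝ) * k (X ω.1) (X ω.2)) (P.prod P)) :
    (∫ ω : Ω × Ω, (⟪ψ ω.1, ψ ω.2⟫ : ℝ) * k (X ω.1) (X ω.2) ∂(P.prod P)) = 0 ↔
      ∀ᵐ x ∂(P.map X), g x = 0 := by
  classical
  obtain ⟨C, hC⟩ := hkBdd
  set μ : Measure (Fin d → ℝ) := P.map X with hμdef
  have hkm : Measurable fun q : (Fin d → ℝ) × (Fin d → ℝ) => k q.1 q.2 := hkCont.measurable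
  have hkx : ∀ x, Measurable fun y => k x y := fun x =>
    (hkCont.comp (Continuous.prodMk_right x)).measurable
  have hky : ∀ y, Continuous fun x => k x y := fun y =>
    hkCont.comp (continuous_id.prodMk continuous_const)
  have hgi : ∀ i : Fin m, Measurable fun x => g x i := fun i =>
    (EuclideanSpace.proj i).continuous.measurable.comp hg
  have hψiL2 : ∀ i : Fin m, MemLp (fun ω => ψ ω i) 2 P := fun i =>
    (EuclideanSpace.proj i : EuclideanSpace ℝ (Fin m) →L[ℝ] ℝ).comp_memLp' hψ
  have hψiInt : ∀ i, Integrable (fun ω => ψ ω i) P := fun i =>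
    (hψiL2 i).integrable one_le_two
  have hgXInt : ∀ i, Integrable (fun ω => g (X ω) i) P := fun i =>
    integrable_condExp.congr (hgVersion i)
  have hgiInt : ∀ i, Integrable (fun x => g x i) μ := by
    intro i
    rw [hμdef, integrable_map_measure (hgi i).aestronglyMeasurable hX.aemeasurable]
    exact hgXInt i
  -- the key conditioning identity
  have hm : MeasurableSpace.comap X inferInstance ≤ (inferInstance : MeasurableSpace Ω) :=
    hX.comap_le
  have hXm : Measurable[MeasurableSpace.comap X inferInstance] X :=
    measurable_iff_comap_le.mpr le_rfl
  have key : ∀ (i : Fin m) (φ : (Fin d → ℝ) → ℝ) (D : ℝ), Measurable φ → (∀ x, |φ x| ≤ D) →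
      ∫ ω, ψ ω i * φ (X ω) ∂P = ∫ x, g x i * φ x ∂μ := by
    intro i φ D hφm hφb
    have hφX_sm : StronglyMeasurable[MeasurableSpace.comap X inferInstance]
        (fun ω => φ (X ω)) := (hφm.comp hXm).stronglyMeasurable
    have hint1 : Integrable ((fun ω => φ (X ω)) * fun ω => ψ ω i) P :=
      (hψiInt i).bdd_mul ((hφm.comp hX).aestronglyMeasurable)
        (Filter.Eventually.of_forall fun ω => by
          simpa [Real.norm_eq_abs] using hφb (X ω))
    have hpull := condExp_mul_of_stronglyMeasurable_left (μ := P) hφX_sm hint1 (hψiInt i)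
    calc ∫ ω, ψ ω i * φ (X ω) ∂P
        = ∫ ω, ((fun ω => φ (X ω)) * fun ω => ψ ω i) ω ∂P := by
          refine integral_congr_ae (Filter.Eventually.of_forall fun ω => ?_)
          simp [mul_comm]
      _ = ∫ ω, (P[(fun ω => φ (X ω)) * fun ω => ψ ω i|
            MeasurableSpace.comap X inferInstance]) ω ∂P := (integral_condExp hm).symm
      _ = ∫ ω, φ (X ω) * (P[fun ω => ψ ω i|MeasurableSpace.comap X inferInstance]) ω ∂P := by
          refine integral_congr_ae (hpull.mono fun ω h => ?_)
          simpa using h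
      _ = ∫ ω, g (X ω) i * φ (X ω) ∂P := by
          refine integral_congr_ae ?_
          filter_upwards [hgVersion i] with ω h
          rw [h, mul_comm]
      _ = ∫ x, g x i * φ x ∂μ := by
          rw [hμdef, integral_map (f := fun x => g x i * φ x) hX.aemeasurable ((hgi i).mul hφm).aestronglyMeasurable]
  -- the function B i x = ∫ x', g x' i * k x x' dμ
  set B : Fin m → (Fin d → ℝ) → ℝ := fun i x => ∫ x', g x' i * k x x' ∂μ with hBdef
  have hgk_int : ∀ (i : Fin m) x, Integrable (fun x' => g x' i * k x x') μ := by
    intro i x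
    refine ((hgiInt i).bdd_mul (hkx x).aestronglyMeasurable
      (Filter.Eventually.of_forall fun x' => by
        simpa [Real.norm_eq_abs] using hC x x')).congr
      (Filter.Eventually.of_forall fun x' => mul_comm _ _)
  have hBcont : ∀ i, Continuous (B i) := by
    intro i
    rw [hBdef]
    refine continuous_of_dominated (bound := fun x' => |g x' i| * C)
      (fun x => ((hgi i).mul (hkx x)).aestronglyMeasurable) ?_
      ((hgiInt i).abs.mul_const C)
      (Filter.Eventually.of_forall fun x' => continuous_const.mul (hky x'))
    intro x
    refine Filter.Eventually.of_forall fun x' => ?_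
    rw [Real.norm_eq_abs, abs_mul]
    exact mul_le_mul_of_nonneg_left (hC x x') (abs_nonneg _)
  have hBbound : ∀ i x, |B i x| ≤ (∫ x', |g x' i| ∂μ) * C := by
    intro i x
    calc |B i x| = ‖∫ x', g x' i * k x x' ∂μ‖ := (Real.norm_eq_abs _).symm
      _ ≤ ∫ x', ‖g x' i * k x x'‖ ∂μ := norm_integral_le_integral_norm _
      _ ≤ ∫ x', |g x' i| * C ∂μ := by
          refine integral_mono (hgk_int i x).norm ((hgiInt i).abs.mul_const C) fun x' => ?_
          rw [Real.norm_eq_abs, abs_mul]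
          exact mul_le_mul_of_nonneg_left (hC x x') (abs_nonneg _)
      _ = (∫ x', |g x' i| ∂μ) * C := integral_mul_const _ _
  -- integrability of each component summand on the product space
  have hFint : ∀ i : Fin m, Integrable
      (fun ω : Ω × Ω => ψ ω.1 i * ψ ω.2 i * k (X ω.1) (X ω.2)) (P.prod P) := by
    intro i
    have h1 : Integrable (fun ω : Ω × Ω => ψ ω.1 i * ψ ω.2 i) (P.prod P) :=
      (hψiInt i).mul_prod (hψiInt i)
    have h2 : AEStronglyMeasurable (fun ω : Ω × Ω => k (X ω.1) (X ω.2)) (P.prod P) :=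
      (hkm.comp ((hX.comp measurable_fst).prodMk (hX.comp measurable_snd))).aestronglyMeasurable
    exact (h1.bdd_mul h2 (Filter.Eventually.of_forall fun ω => by
      simpa [Real.norm_eq_abs] using hC (X ω.1) (X ω.2))).congr
      (Filter.Eventually.of_forall fun ω => by ring)
  -- the per-component double integral
  set J : Fin m → ℝ := fun i => ∫ x, g x i * B i x ∂μ with hJdef
  have step2 : ∀ i : Fin m,
      ∫ ω : Ω × Ω, ψ ω.1 i * ψ ω.2 i * k (X ω.1) (X ω.2) ∂(P.prod P) = J i := by
    intro i
    rw [integral_prod _ (hFint i)]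
    have inner : ∀ ω1 : Ω, ∫ ω2, ψ ω1 i * ψ ω2 i * k (X ω1) (X ω2) ∂P
        = ψ ω1 i * B i (X ω1) := by
      intro ω1
      have hr : ∀ ω2, ψ ω1 i * ψ ω2 i * k (X ω1) (X ω2)
          = ψ ω1 i * (ψ ω2 i * k (X ω1) (X ω2)) := fun ω2 => by ring
      simp_rw [hr]
      rw [integral_const_mul]
      congr 1
      exact key i (fun y => k (X ω1) y) C (hkx (X ω1)) (fun y => hC _ y)
    simp only [inner]
    exact key i (B i) ((∫ x', |g x' i| ∂μ) * C) (hBcont i).measurable (hBbound i)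
  -- the total integral is the sum of the J i
  have hIsum : (∫ ω : Ω × Ω, (⟪ψ ω.1, ψ ω.2⟫ : ℝ) * k (X ω.1) (X ω.2) ∂(P.prod P))
      = ∑ i : Fin m, J i := by
    have hrw : ∀ ω : Ω × Ω, (⟪ψ ω.1, ψ ω.2⟫ : ℝ) * k (X ω.1) (X ω.2)
        = ∑ i : Fin m, ψ ω.1 i * ψ ω.2 i * k (X ω.1) (X ω.2) := by
      intro ω
      rw [PiLp.inner_apply, Finset.sum_mul]
      simp [RCLike.inner_apply, conj_trivial]
      exact Finset.sum_congr rfl fun j _ => by ring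
    calc (∫ ω : Ω × Ω, (⟪ψ ω.1, ψ ω.2⟫ : ℝ) * k (X ω.1) (X ω.2) ∂(P.prod P))
        = ∫ ω : Ω × Ω, ∑ i : Fin m, ψ ω.1 i * ψ ω.2 i * k (X ω.1) (X ω.2) ∂(P.prod P) :=
          integral_congr_ae (Filter.Eventually.of_forall hrw)
      _ = ∑ i : Fin m, ∫ ω : Ω × Ω, ψ ω.1 i * ψ ω.2 i * k (X ω.1) (X ω.2) ∂(P.prod P) :=
          integral_finset_sum Finset.univ fun i _ => hFint i
      _ = ∑ i : Fin m, J i := Finset.sum_congr rfl fun i _ => step2 i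
  -- relation between a.e. vanishing w.r.t. μ and w.r.t. volume
  have hofReal : Measurable fun x => ENNReal.ofReal (p x) := ENNReal.measurable_ofReal.comp hpm
  have hlink : ∀ i : Fin m, ((fun x => g x i * p x) =ᵐ[volume] 0) ↔ ∀ᵐ x ∂μ, g x i = 0 := by
    intro i
    rw [hlaw, ae_withDensity_iff hofReal]
    simp only [Filter.EventuallyEq, Pi.zero_apply]
    constructor
    · intro h
      filter_upwards [h] with x hx hpx
      rcases mul_eq_zero.1 hx with h1 | h1
      · exact h1
      · exact absurd (by simp [h1]) hpx
    · intro h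
      filter_upwards [h] with x hx
      by_cases hp : p x = 0
      · simp [hp]
      · have hne : ENNReal.ofReal (p x) ≠ 0 := by
          simp only [ne_eq, ENNReal.ofReal_eq_zero, not_le]
          exact lt_of_le_of_ne (hp0 x) (Ne.symm hp)
        simp [hx hne]
  -- integrals w.r.t. μ as weighted Lebesgue integrals
  have hμint : ∀ F : (Fin d → ℝ) → ℝ, ∫ x, F x ∂μ = ∫ x, p x * F x ∂volume := by
    intro F
    rw [hlaw]
    have he : (fun x => ENNReal.ofReal (p x))
        = fun x => ((Real.toNNReal (p x) : ℝ≥0) : ℝ≥0∞) := rfl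
    rw [he, integral_withDensity_eq_integral_smul (hpm.real_toNNReal) F]
    refine integral_congr_ae (Filter.Eventually.of_forall fun x => ?_)
    simp [NNReal.smul_def, Real.coe_toNNReal _ (hp0 x)]
  have hJvol : ∀ i : Fin m, J i
      = ∫ x, ∫ x', (g x i * p x) * k x x' * (g x' i * p x') ∂volume ∂volume := by
    intro i
    have h1 : J i = ∫ x, p x * (g x i * B i x) ∂volume := hμint _
    rw [h1]
    refine integral_congr_ae (Filter.Eventually.of_forall fun x => ?_)
    show p x * (g x i * B i x) = ∫ x', (g x i * p x) * k x x' * (g x' i * p x') ∂volume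
    have hB : B i x = ∫ x', p x' * (g x' i * k x x') ∂volume := hμint _
    have h2 : p x * (g x i * B i x)
        = (g x i * p x) * ∫ x', p x' * (g x' i * k x x') ∂volume := by rw [hB]; ring
    rw [h2, ← integral_const_mul]
    exact integral_congr_ae (Filter.Eventually.of_forall fun x' => by ring)
  -- dichotomy for each component
  have hdich : ∀ i : Fin m, (J i = 0 ↔ ∀ᵐ x ∂μ, g x i = 0) ∧ 0 ≤ J i := by
    intro i
    by_cases hcase : ∀ᵐ x ∂μ, g x i = 0
    · have hz : J i = 0 := by
        rw [hJdef]
        simp only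
        have h0 : (fun x => g x i * B i x) =ᵐ[μ] 0 := by
          filter_upwards [hcase] with x hx
          simp [hx]
        rw [integral_congr_ae h0]
        simp
      exact ⟨⟨fun _ => hcase, fun _ => hz⟩, le_of_eq hz.symm⟩
    · have hfne : ¬ (fun x => g x i * p x) =ᵐ[volume] 0 := fun h => hcase ((hlink i).1 h)
      have hsq : Integrable (fun x => (g x i * p x) ^ 2) volume := (hhL2 i).integrable_sq
      have hpos2 : 0 < ∫ x, (g x i * p x) ^ 2 ∂volume := by
        rcases lt_or_eq_of_le (integral_nonneg (f := fun x => (g x i * p x) ^ 2) fun x => sq_nonneg (g x i * p x)) with h | h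
        · exact h
        · exfalso
          have h0 := (integral_eq_zero_iff_of_nonneg_ae
            (Filter.Eventually.of_forall fun x => sq_nonneg (g x i * p x)) hsq).1 h.symm
          refine hfne (h0.mono fun x hx => ?_)
          have : (g x i * p x) ^ 2 = 0 := by simpa using hx
          simpa using sq_eq_zero_iff.1 this
      have hpos := hISPD (fun x => g x i * p x) ((hgi i).mul hpm) (hhL2 i) hpos2
      have hJpos : 0 < J i := by
        rw [hJvol i]
        exact hpos
      exact ⟨⟨fun h0 => absurd h0 (ne_of_gt hJpos), fun h => absurd h hcase⟩, le_of_lt hJpos⟩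
  -- conclusion
  rw [hIsum]
  constructor
  · intro h
    have h0 : ∀ i ∈ Finset.univ, J i = 0 :=
      (Finset.sum_eq_zero_iff_of_nonneg fun i _ => (hdich i).2).1 h
    have hall : ∀ i : Fin m, ∀ᵐ x ∂μ, g x i = 0 :=
      fun i => ((hdich i).1).1 (h0 i (Finset.mem_univ i))
    rw [← ae_all_iff] at hall
    filter_upwards [hall] with x hx
    ext j
    exact hx j
  · intro h
    refine Finset.sum_eq_zero fun i _ => ?_
    exact ((hdich i).1).2 (h.mono fun x hx => by rw [hx]; rfl)
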